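/- In type Cₙ (n ≥ 2), the chain of dominant coweights 0 < ω₁^∨ < ω₂^∨ < ⋯ < ω_{n-1}^∨ < 2ωₙ^∨ consists of covering relations in the dominance order, and moreover ωₘ^∨ < ω₁^∨ + ω_{m-1}^∨ is also a covering relation for 2 ≤ m ≤ n-1. -/
import Mathlib


/-- The simple coroots of type `Cₙ` in `ℤⁿ`: `αᵢ^∨ = eᵢ - eᵢ₊₁` for `i < n` and
`αₙ^∨ = eₙ` (indices `i : Fin n` are 0-based). -/
def Ccoroot (n : ℕ) (i : Fin n) : Fin n → ℤ :=
  fun j => if i.val = n - 1 then (if j = i then 1 else 0)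
    else if j.val = i.val then 1 else if j.val = i.val + 1 then -1 else 0

/-- The fundamental coweight `ωₘ^∨ = e₁ + ⋯ + eₘ` of type `Cₙ`. -/
def Comega (n m : ℕ) : Fin n → ℤ := fun j => if j.val < m then 1 else 0

/-- Dominance order: `μ - λ` is a nonnegative integer combination of simple coroots. -/
def CdomLE (n : ℕ) (lam mu : Fin n → ℤ) : Prop :=
  ∃ c : Fin n → ℕ, mu - lam = ∑ i, (c i : ℤ) • Ccoroot n i

/-- Dominant coweights of type `Cₙ`: weakly decreasing with nonnegative entries. -/
def Cdominant (n : ℕ) (mu : Fin n → ℤ) : Prop :=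
  Antitone mu ∧ ∀ j, 0 ≤ mu j

/-- Covering relation in the dominance order on dominant coweights of type `Cₙ`. -/
def CCover (n : ℕ) (lam mu : Fin n → ℤ) : Prop :=
  CdomLE n lam mu ∧ lam ≠ mu ∧
  ¬ ∃ ν : Fin n → ℤ, Cdominant n ν ∧ CdomLE n lam ν ∧ CdomLE n ν mu ∧ ν ≠ lam ∧ ν ≠ mu

namespace S13

def extv (n : ℕ) (d : Fin n → ℤ) (k : ℕ) : ℤ := if h : k < n then d ⟨k, h⟩ else 0

def T (n : ℕ) (d : Fin n → ℤ) (t : ℕ) : ℤ := ∑ k ∈ Finset.range t, extv n d k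

lemma T_succ (n : ℕ) (d : Fin n → ℤ) (t : ℕ) : T n d (t+1) = T n d t + extv n d t :=
  Finset.sum_range_succ _ _

lemma entry (n : ℕ) (d : Fin n → ℤ) (t : ℕ) (h : t < n) :
    d ⟨t, h⟩ = T n d (t+1) - T n d t := by
  rw [T_succ]; simp [extv, h]

lemma T_sub (n : ℕ) (a b : Fin n → ℤ) (t : ℕ) : T n (a - b) t = T n a t - T n b t := by
  unfold T
  rw [← Finset.sum_sub_distrib]
  refine Finset.sum_congr rfl fun k _ => ?_
  unfold extv; split <;> simp

lemma T_add (n : ℕ) (a b : Fin n → ℤ) (t : ℕ) : T n (a + b) t = T n a t + T n b t := by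
  unfold T
  rw [← Finset.sum_add_distrib]
  refine Finset.sum_congr rfl fun k _ => ?_
  unfold extv; split <;> simp

lemma T_finsum (n : ℕ) (f : Fin n → Fin n → ℤ) (t : ℕ) :
    T n (∑ i, f i) t = ∑ i, T n (f i) t := by
  unfold T
  rw [Finset.sum_comm]
  refine Finset.sum_congr rfl fun k _ => ?_
  unfold extv; split
  · exact Finset.sum_apply _ _ _
  · simp

lemma T_smul (n : ℕ) (c : ℤ) (d : Fin n → ℤ) (t : ℕ) : T n (c • d) t = c * T n d t := by
  unfold T
  rw [Finset.mul_sum]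
  refine Finset.sum_congr rfl fun k _ => ?_
  unfold extv; split <;> simp

lemma T_coroot (n : ℕ) (i : Fin n) (t : ℕ) (ht : t ≤ n) :
    T n (Ccoroot n i) t = if t = i.val + 1 then 1 else 0 := by
  induction t with
  | zero => simp [T]
  | succ t ih =>
    have ht' : t < n := ht
    rw [T_succ, ih (le_of_lt ht')]
    have hi := i.isLt
    simp only [extv, ht', dif_pos, Ccoroot, Fin.ext_iff]
    split_ifs <;> omega

lemma T_comega (n m t : ℕ) (ht : t ≤ n) : T n (Comega n m) t = (min t m : ℤ) := by
  induction t with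
  | zero => simp [T]
  | succ t ih =>
    have ht' : t < n := ht
    rw [T_succ, ih (le_of_lt ht')]
    simp only [extv, ht', dif_pos, Comega]
    split_ifs <;> push_cast <;> omega

lemma eq_of_T (n : ℕ) (a b : Fin n → ℤ) (h : ∀ t, t ≤ n → T n a t = T n b t) : a = b := by
  funext j
  have hj := j.isLt
  have : j = (⟨j.val, hj⟩ : Fin n) := rfl
  rw [this, entry n a j.val hj, entry n b j.val hj, h _ hj, h _ (by omega)]

lemma cdomLE_iff (n : ℕ) (lam mu : Fin n → ℤ) :
    CdomLE n lam mu ↔ ∀ t, t ≤ n → 0 ≤ T n (mu - lam) t := by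
  constructor
  · rintro ⟨c, hc⟩ t ht
    rw [hc, T_finsum]
    refine Finset.sum_nonneg fun i _ => ?_
    rw [T_smul, T_coroot n i t ht]
    positivity
  · intro h
    refine ⟨fun i => (T n (mu - lam) (i.val + 1)).toNat, eq_of_T n _ _ fun t ht => ?_⟩
    rw [T_finsum]
    have key : ∀ i : Fin n, T n ((((T n (mu - lam) (i.val + 1)).toNat : ℤ)) • Ccoroot n i) t
        = if t = i.val + 1 then ((T n (mu - lam) (i.val+1)).toNat : ℤ) else 0 := by
      intro i
      rw [T_smul, T_coroot n i t ht]
      split_ifs <;> simp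
    rw [Finset.sum_congr rfl fun i _ => key i]
    rcases Nat.eq_zero_or_pos t with rfl | htpos
    · simp [T]
    · have hs : t - 1 < n := by omega
      have : ∀ i : Fin n, (if t = i.val + 1 then ((T n (mu - lam) (i.val+1)).toNat : ℤ) else 0)
          = if i = ⟨t-1, hs⟩ then ((T n (mu - lam) (i.val+1)).toNat : ℤ) else 0 := by
        intro i
        have : t = i.val + 1 ↔ i = ⟨t-1, hs⟩ := by
          rw [Fin.ext_iff]; simp; omega
        simp [this]
      rw [Finset.sum_congr rfl fun i _ => this i, Finset.sum_ite_eq' Finset.univ]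
      simp only [Finset.mem_univ, if_pos]
      have h1 : t - 1 + 1 = t := by omega
      rw [h1, Int.toNat_of_nonneg (h t ht)]

lemma T_mono (n : ℕ) (d : Fin n → ℤ) (hd : ∀ j, 0 ≤ d j) {s t : ℕ} (hst : s ≤ t) :
    T n d s ≤ T n d t := by
  unfold T
  refine Finset.sum_le_sum_of_subset_of_nonneg (Finset.range_subset_range.2 hst) fun k _ _ => ?_
  unfold extv; split
  · exact hd _
  · exact le_refl 0

lemma T_stable (n : ℕ) (d : Fin n → ℤ) (s : ℕ)
    (h : ∀ k (hk : k < n), s ≤ k → d ⟨k, hk⟩ = 0) {t : ℕ} (hst : s ≤ t) :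
    T n d t = T n d s := by
  induction t, hst using Nat.le_induction with
  | base => rfl
  | succ t hst ih =>
    rw [T_succ, ih]
    have : extv n d t = 0 := by
      unfold extv; split
      · exact h _ _ hst
      · rfl
    rw [this, add_zero]

lemma T_le_card (n : ℕ) (d : Fin n → ℤ) (hd : ∀ j, d j ≤ 1) (t : ℕ) : T n d t ≤ t := by
  induction t with
  | zero => simp [T]
  | succ t ih =>
    rw [T_succ]
    have : extv n d t ≤ 1 := by unfold extv; split; exact hd _; omega
    push_cast; omega

end S13

namespace S13

lemma cover1 (n m : ℕ) (h1 : 1 ≤ m) (h2 : m ≤ n) :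
    CCover n (Comega n (m-1)) (Comega n m) := by
  refine ⟨?_, ?_, ?_⟩
  · rw [cdomLE_iff]
    intro t ht
    rw [T_sub, T_comega n m t ht, T_comega n (m-1) t ht]
    push_cast; omega
  · intro h
    have := congrFun h ⟨m-1, by omega⟩
    simp only [Comega] at this
    split_ifs at this <;> omega
  · rintro ⟨ν, ⟨hanti, hpos⟩, hlv, hvm, hvl, hvm2⟩
    rw [cdomLE_iff] at hlv hvm
    have hb : ∀ t, t ≤ n → (min t (m-1) : ℤ) ≤ T n ν t ∧ T n ν t ≤ (min t m : ℤ) := by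
      intro t ht
      have a1 := hlv t ht
      have a2 := hvm t ht
      rw [T_sub, T_comega n (m-1) t ht] at a1
      rw [T_sub, T_comega n m t ht] at a2
      constructor <;> omega
    have hm1n : m - 1 < n := by omega
    -- entries with small index are 1
    have hsmall : ∀ j : Fin n, j.val < m - 1 → ν j = 1 := by
      intro j hj
      have hj1 : j.val + 1 ≤ n := j.isLt
      have e := entry n ν j.val j.isLt
      have b1 := hb j.val (by omega)
      have b2 := hb (j.val+1) hj1
      have : j = ⟨j.val, j.isLt⟩ := rfl
      rw [this, e]
      have c1 : (min j.val (m-1) : ℤ) = (j.val : ℤ) := by push_cast; omega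
      have c2 : (min j.val m : ℤ) = (j.val : ℤ) := by push_cast; omega
      have c3 : (min (j.val+1) (m-1) : ℤ) = ((j.val:ℤ)+1) := by push_cast; omega
      have c4 : (min (j.val+1) m : ℤ) = ((j.val:ℤ)+1) := by push_cast; omega
      omega
    set j0 : Fin n := ⟨m-1, hm1n⟩ with hj0
    have hTm1 : T n ν (m-1) = (m:ℤ) - 1 := by
      have := hb (m-1) (by omega)
      have c1 : (min (m-1) (m-1) : ℤ) = (m:ℤ)-1 := by push_cast; omega
      have c2 : (min (m-1) m : ℤ) = (m:ℤ)-1 := by push_cast; omega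
      omega
    have hb0 : ν j0 = 0 ∨ ν j0 = 1 := by
      have e := entry n ν (m-1) hm1n
      have b2 := hb (m-1+1) (by omega)
      have c4 : (min (m-1+1) m : ℤ) = (m:ℤ) := by push_cast; omega
      have hp := hpos j0
      rw [hj0]
      omega
    rcases hb0 with hz | ho
    · apply hvl
      funext j
      by_cases hj : j.val < m - 1
      · rw [hsmall j hj]
        simp [Comega, hj]
      · have hle : j0 ≤ j := by
          rw [Fin.le_def]; simp [hj0]; omega
        have := hanti hle
        have hp := hpos j
        have : ν j = 0 := by omega
        rw [this]
        simp only [Comega]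
        rw [if_neg (by omega)]
    · apply hvm2
      funext j
      by_cases hj : j.val < m - 1
      · rw [hsmall j hj]
        simp only [Comega]
        rw [if_pos (by omega)]
      · by_cases hj2 : j.val = m - 1
        · have : j = j0 := Fin.ext hj2
          rw [this, ho]
          simp only [Comega]
          rw [if_pos (by omega)]
        · -- j.val ≥ m
          have hjm : m ≤ j.val := by omega
          have hTconst : ∀ t, m ≤ t → t ≤ n → T n ν t = (m:ℤ) := by
            intro t hmt htn
            have hTm : T n ν m = (m:ℤ) := by
              have e := entry n ν (m-1) hm1n
              have h1 : m - 1 + 1 = m := by omega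
              rw [h1] at e
              have hho : ν ⟨m-1, hm1n⟩ = 1 := ho
              have hT1 : T n ν (m-1) = (m:ℤ) - 1 := hTm1
              omega
            have := T_mono n ν hpos hmt
            have b2 := (hb t htn).2
            have c : (min t m : ℤ) = (m:ℤ) := by push_cast; omega
            omega
          have e := entry n ν j.val j.isLt
          have h1 := hTconst j.val hjm (le_of_lt j.isLt)
          have h2 := hTconst (j.val+1) (by omega) j.isLt
          have : j = ⟨j.val, j.isLt⟩ := rfl
          rw [this, e, h1, h2]
          simp only [Comega]
          rw [if_neg (by omega)]
          ring

end S13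

namespace S13

lemma cover3 (n m : ℕ) (h1 : 2 ≤ m) (h2 : m + 1 ≤ n) :
    CCover n (Comega n m) (Comega n 1 + Comega n (m-1)) := by
  have hTmu : ∀ t, t ≤ n → T n (Comega n 1 + Comega n (m-1)) t
      = (min t 1 : ℤ) + (min t (m-1) : ℤ) := by
    intro t ht
    rw [T_add, T_comega n 1 t ht, T_comega n (m-1) t ht]
    omega
  refine ⟨?_, ?_, ?_⟩
  · rw [cdomLE_iff]
    intro t ht
    rw [T_sub, hTmu t ht, T_comega n m t ht]
    omega
  · intro h
    have := congrFun h ⟨0, by omega⟩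
    simp only [Comega, Pi.add_apply] at this
    split_ifs at this <;> omega
  · rintro ⟨ν, ⟨hanti, hpos⟩, hlv, hvm, hvl, hvm2⟩
    rw [cdomLE_iff] at hlv hvm
    have hb : ∀ t, t ≤ n →
        (min t m : ℤ) ≤ T n ν t ∧ T n ν t ≤ (min t 1 : ℤ) + (min t (m-1) : ℤ) := by
      intro t ht
      have a1 := hlv t ht
      have a2 := hvm t ht
      rw [T_sub, T_comega n m t ht] at a1
      rw [T_sub, hTmu t ht] at a2
      constructor <;> omega
    have h0n : 0 < n := by omega
    have hT1 : T n ν 1 = ν ⟨0, h0n⟩ := by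
      simp [T, Finset.sum_range_one, extv, h0n]
    have ha : ν ⟨0, h0n⟩ = 1 ∨ ν ⟨0, h0n⟩ = 2 := by
      have := hb 1 (by omega)
      rw [hT1] at this
      have c1 : (min 1 m : ℤ) = 1 := by omega
      have c2 : (min 1 1 : ℤ) = 1 := by omega
      have c3 : (min 1 (m-1) : ℤ) = 1 := by push_cast; omega
      omega
    rcases ha with ha | ha
    · -- ν = Comega n m
      apply hvl
      have hle1 : ∀ j, ν j ≤ 1 := by
        intro j
        have : (⟨0, h0n⟩ : Fin n) ≤ j := by simp [Fin.le_def]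
        have := hanti this
        omega
      have hTeq : ∀ t, t ≤ m → T n ν t = (t : ℤ) := by
        intro t htm
        have b1 := (hb t (by omega)).1
        have := T_le_card n ν hle1 t
        have c1 : (min t m : ℤ) = (t : ℤ) := by push_cast; omega
        omega
      have hTeq2 : ∀ t, m ≤ t → t ≤ n → T n ν t = (m : ℤ) := by
        intro t hmt htn
        have := T_mono n ν hpos hmt
        have b2 := (hb t htn).2
        have hm := hTeq m (le_refl m)
        have c2 : (min t 1 : ℤ) = 1 := by push_cast; omega
        have c3 : (min t (m-1) : ℤ) = (m:ℤ)-1 := by push_cast; omega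
        omega
      funext j
      have e := entry n ν j.val j.isLt
      have : j = ⟨j.val, j.isLt⟩ := rfl
      rw [this, e]
      by_cases hj : j.val < m
      · rw [hTeq j.val (by omega), hTeq (j.val+1) (by omega)]
        simp only [Comega]
        rw [if_pos hj]
        push_cast; ring
      · rw [hTeq2 j.val (by omega) (le_of_lt j.isLt), hTeq2 (j.val+1) (by omega) j.isLt]
        simp only [Comega]
        rw [if_neg hj]
        ring
    · -- ν = Comega n 1 + Comega n (m-1)
      apply hvm2
      -- entries up to m-2 are ≥ 1
      have hstep1 : ∀ q (hq : q < n), q ≤ m - 2 → 1 ≤ ν ⟨q, hq⟩ := by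
        intro q hq hqm
        by_contra hc
        push_neg at hc
        have hq0 : ν ⟨q, hq⟩ = 0 := by have := hpos ⟨q, hq⟩; omega
        have hzero : ∀ k (hk : k < n), q ≤ k → ν ⟨k, hk⟩ = 0 := by
          intro k hk hqk
          have : (⟨q, hq⟩ : Fin n) ≤ ⟨k, hk⟩ := by rw [Fin.le_def]; exact hqk
          have := hanti this
          have := hpos ⟨k, hk⟩
          omega
        have hst := T_stable n ν q hzero (show q ≤ m by omega)
        have b1 := (hb m (by omega)).1
        have b2 := (hb q (by omega)).2
        have c1 : (min m m : ℤ) = (m:ℤ) := by omega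
        have c2 : (min q 1 : ℤ) ≤ 1 := by push_cast; omega
        have c3 : (min q (m-1) : ℤ) ≤ (q:ℤ) := by push_cast; omega
        omega
      have hstep2 : ∀ t, 1 ≤ t → t ≤ m - 1 → T n ν t = (t : ℤ) + 1 := by
        intro t ht1 htm
        induction t with
        | zero => omega
        | succ t ih =>
          rcases Nat.eq_zero_or_pos t with rfl | htpos
          · rw [hT1, ha]; norm_num
          · have iht := ih (by omega) (by omega)
            have htn : t < n := by omega
            have e := entry n ν t htn
            have hge := hstep1 t htn (by omega)
            have b2 := (hb (t+1) (by omega)).2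
            have c2 : (min (t+1) 1 : ℤ) = 1 := by push_cast; omega
            have c3 : (min (t+1) (m-1) : ℤ) = (t:ℤ)+1 := by push_cast; omega
            push_cast
            omega
      have hTeq2 : ∀ t, m - 1 ≤ t → t ≤ n → T n ν t = (m : ℤ) := by
        intro t hmt htn
        have hm1 := hstep2 (m-1) (by omega) (le_refl _)
        have := T_mono n ν hpos hmt
        have b2 := (hb t htn).2
        have c2 : (min t 1 : ℤ) = 1 := by push_cast; omega
        have c3 : (min t (m-1) : ℤ) = (m:ℤ)-1 := by push_cast; omega
        have c4 : ((m-1 : ℕ) : ℤ) = (m:ℤ)-1 := by push_cast; omega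
        omega
      funext j
      have e := entry n ν j.val j.isLt
      have hjj : j = ⟨j.val, j.isLt⟩ := rfl
      simp only [Pi.add_apply, Comega]
      rcases Nat.eq_zero_or_pos j.val with hj0 | hjpos
      · have : j = ⟨0, h0n⟩ := Fin.ext hj0
        rw [this, ha]
        rw [if_pos (by omega), if_pos (by omega)]
        norm_num
      · by_cases hj : j.val ≤ m - 2
        · rw [hjj, e, hstep2 j.val (by omega) (by omega), hstep2 (j.val+1) (by omega) (by omega)]
          rw [if_neg (by omega), if_pos (by omega)]
          push_cast; ring
        · rw [hjj, e, hTeq2 j.val (by omega) (le_of_lt j.isLt), hTeq2 (j.val+1) (by omega) j.isLt]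
          rw [if_neg (by omega), if_neg (by omega)]
          ring

lemma comega_n (n : ℕ) : (fun _ => (1:ℤ)) = Comega n n := by
  funext j
  simp [Comega, j.isLt]

end S13


/-- in type `Cₙ` (`n ≥ 2`) the chain
`0 < ω₁^∨ < ω₂^∨ < ⋯ < ω_{n-1}^∨ < 2ωₙ^∨ = (1,…,1)` consists of covering relations in
the dominance order, and `ωₘ^∨ < ω₁^∨ + ω_{m-1}^∨` is also a covering relation for
`2 ≤ m ≤ n - 1`. -/
theorem stmt13 (n : ℕ) (hn : 2 ≤ n) :
    (∀ m : ℕ, 1 ≤ m → m ≤ n - 1 → CCover n (Comega n (m - 1)) (Comega n m)) ∧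
    CCover n (Comega n (n - 1)) (fun _ => 1) ∧
    (∀ m : ℕ, 2 ≤ m → m ≤ n - 1 →
      CCover n (Comega n m) (Comega n 1 + Comega n (m - 1))) := by
  refine ⟨fun m hm1 hm2 => S13.cover1 n m hm1 (by omega), ?_, fun m hm1 hm2 => S13.cover3 n m hm1 (by omega)⟩
  rw [S13.comega_n n]
  exact S13.cover1 n n (by omega) (le_refl n)
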